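/- Let D ⊆ ℝⁿ be a compact set, g : D → ℝ Lipschitz with constant l_g, and let (x₁,y₁),…,(x_N,y_N) be an ε̄-noisy dataset generated by g with covering radius h(X,D) = h > 0. Fix ε ≥ ε̄. If f* : D → ℝ minimizes the Lipschitz seminorm over all Lipschitz functions f : D → ℝ with max_i ‖yᵢ − f(xᵢ)‖ ≤ ε, then sup_{x∈D} ‖g(x) − f*(x)‖ ≤ 2(l_g·h + ε). -/

import Mathlib

open scoped NNReal

/-- The Lipschitz seminorm of `f` on the set `D`. -/
noncomputable def lipSemi {n : ℕ} (D : Set (EuclideanSpace ℝ (Fin n)))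
    (f : EuclideanSpace ℝ (Fin n) → ℝ) : ℝ :=
  sInf {γ : ℝ | 0 ≤ γ ∧ ∀ x ∈ D, ∀ y ∈ D, ‖f x - f y‖ ≤ γ * ‖x - y‖}

lemma lipSemi_le {n : ℕ} {D : Set (EuclideanSpace ℝ (Fin n))}
    {f : EuclideanSpace ℝ (Fin n) → ℝ} {C : ℝ} (hC : 0 ≤ C)
    (hf : ∀ x ∈ D, ∀ y ∈ D, ‖f x - f y‖ ≤ C * ‖x - y‖) :
    lipSemi D f ≤ C :=
  csInf_le ⟨0, fun _ hγ => hγ.1⟩ ⟨hC, hf⟩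

lemma le_lipSemi_mul {n : ℕ} {D : Set (EuclideanSpace ℝ (Fin n))}
    {f : EuclideanSpace ℝ (Fin n) → ℝ}
    (hne : ∃ C : ℝ, 0 ≤ C ∧ ∀ x ∈ D, ∀ y ∈ D, ‖f x - f y‖ ≤ C * ‖x - y‖)
    {x y : EuclideanSpace ℝ (Fin n)} (hx : x ∈ D) (hy : y ∈ D) :
    ‖f x - f y‖ ≤ lipSemi D f * ‖x - y‖ := by
  obtain ⟨C, hC0, hC⟩ := hne
  by_cases hxy : x = y
  · simp [hxy]
  · have hpos : 0 < ‖x - y‖ := by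
      simpa [norm_pos_iff, sub_eq_zero] using hxy
    rw [← div_le_iff₀ hpos]
    refine le_csInf ⟨C, hC0, hC⟩ fun γ hγ => ?_
    exact (div_le_iff₀ hpos).mpr (hγ.2 x hx y hy)

theorem stmt3 {n N : ℕ} (hN : 0 < N)
    (D : Set (EuclideanSpace ℝ (Fin n))) (hD : IsCompact D)
    (g : EuclideanSpace ℝ (Fin n) → ℝ)
    (lg : ℝ) (hlg : 0 ≤ lg)
    (hg : ∀ x ∈ D, ∀ y ∈ D, ‖g x - g y‖ ≤ lg * ‖x - y‖)
    (xs : Fin N → EuclideanSpace ℝ (Fin n)) (ys : Fin N → ℝ)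
    (hxs : ∀ i, xs i ∈ D)
    (εbar ε h : ℝ) (hεbar : 0 ≤ εbar) (hε : εbar ≤ ε) (hh : 0 < h)
    (hcov : ∀ x ∈ D, Metric.infDist x (Set.range xs) ≤ h)
    (hnoise : ∀ i, ‖g (xs i) - ys i‖ ≤ εbar)
    (fstar : EuclideanSpace ℝ (Fin n) → ℝ)
    (hfstarLip : ∃ C : ℝ≥0, LipschitzOnWith C fstar D)
    (hfstarLoss : ∀ i, ‖ys i - fstar (xs i)‖ ≤ ε)
    (hfstarMin : ∀ f : EuclideanSpace ℝ (Fin n) → ℝ,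
        (∃ C : ℝ≥0, LipschitzOnWith C f D) →
        (∀ i, ‖ys i - f (xs i)‖ ≤ ε) →
        lipSemi D fstar ≤ lipSemi D f) :
    ∀ x ∈ D, ‖g x - fstar x‖ ≤ 2 * (lg * h + ε) := by
  -- g is feasible, so lipSemi D fstar ≤ lipSemi D g ≤ lg
  have hgfeas : lipSemi D fstar ≤ lg := by
    have h1 : lipSemi D fstar ≤ lipSemi D g := by
      apply hfstarMin g ⟨⟨lg, hlg⟩, ?_⟩ ?_
      · apply LipschitzOnWith.of_dist_le_mul
        intro a ha b hb
        exact (by simpa [dist_eq_norm] using hg a ha b hb : dist (g a) (g b) ≤ lg * dist a b)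
      · intro i
        calc ‖ys i - g (xs i)‖ = ‖g (xs i) - ys i‖ := by rw [norm_sub_rev]
          _ ≤ εbar := hnoise i
          _ ≤ ε := hε
    exact h1.trans (lipSemi_le hlg hg)
  have hfstar' : ∃ C : ℝ, 0 ≤ C ∧ ∀ x ∈ D, ∀ y ∈ D, ‖fstar x - fstar y‖ ≤ C * ‖x - y‖ := by
    obtain ⟨C, hC⟩ := hfstarLip
    refine ⟨C, C.coe_nonneg, fun a ha b hb => ?_⟩
    have := hC.dist_le_mul a ha b hb
    simpa [dist_eq_norm] using this
  intro x hx
  -- find nearest data point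
  have hne : (Set.range xs).Nonempty := ⟨xs ⟨0, hN⟩, Set.mem_range_self _⟩
  obtain ⟨z, hz, hzd⟩ := (Set.finite_range xs).isCompact.exists_infDist_eq_dist hne x
  obtain ⟨i, rfl⟩ := hz
  have hdist : ‖x - xs i‖ ≤ h := by
    rw [← dist_eq_norm, ← hzd]; exact hcov x hx
  have hL : lipSemi D fstar ≥ 0 := by
    obtain ⟨C, hC0, hC⟩ := hfstar'
    exact le_csInf ⟨C, hC0, hC⟩ (fun γ hγ => hγ.1)
  have h1 : ‖g x - g (xs i)‖ ≤ lg * h :=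
    (hg x hx (xs i) (hxs i)).trans (by nlinarith [norm_nonneg (x - xs i)])
  have h2 : ‖fstar (xs i) - fstar x‖ ≤ lg * h := by
    have := le_lipSemi_mul hfstar' (hxs i) hx
    have hn : ‖xs i - x‖ = ‖x - xs i‖ := norm_sub_rev _ _
    nlinarith [norm_nonneg (x - xs i), norm_nonneg (xs i - x)]
  have h3 : ‖g (xs i) - ys i‖ ≤ εbar := hnoise i
  have h4 : ‖ys i - fstar (xs i)‖ ≤ ε := hfstarLoss i
  have tri : ∀ a b c : ℝ, ‖a - c‖ ≤ ‖a - b‖ + ‖b - c‖ := fun a b c => by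
    simpa [dist_eq_norm] using dist_triangle a b c
  have t1 := tri (g x) (g (xs i)) (fstar x)
  have t2 := tri (g (xs i)) (ys i) (fstar x)
  have t3 := tri (ys i) (fstar (xs i)) (fstar x)
  linarith
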